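/- For the extension A = M_n(k) over C = T_n(k) (upper triangular matrices), the element 1 ⊗_C 1 equals Σᵢ e_{i1} ⊗_C e_{1i}, the image of a Casimir element of (A ⊗_k A)^A; consequently A is an H-separable extension of C. -/

import Mathlib

open TensorProduct LinearMap

noncomputable section

variable {K : Type*} [CommRing K] {A B : Type*} [Ring A] [Ring B] [Algebra K A] [Algebra K B]

/-- Left multiplication by `a` on the first tensorand of `A ⊗[K] A`. -/
def lmulT (a : A) : A ⊗[K] A →ₗ[K] A ⊗[K] A := rTensor A (mulLeft K a)

/-- Right multiplication by `a` on the second tensorand of `A ⊗[K] A`. -/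
def rmulT (a : A) : A ⊗[K] A →ₗ[K] A ⊗[K] A := lTensor A (mulRight K a)

/-- The relations defining `A ⊗_B A` as a quotient of `A ⊗[K] A`; working modulo
`relJ f` amounts to working in the tensor square `A ⊗_B A` of the extension `f`. -/
def relJ (f : B →ₐ[K] A) : Submodule K (A ⊗[K] A) :=
  Submodule.span K {z | ∃ x b y, z = (x * f b) ⊗ₜ[K] y - x ⊗ₜ[K] (f b * y)}

/-- `α` is a `B`-`B`-bimodule endomorphism of `A`. -/
def IsBB (f : B →ₐ[K] A) (α : A →ₗ[K] A) : Prop :=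
  (∀ b x, α (f b * x) = f b * α x) ∧ (∀ b x, α (x * f b) = α x * f b)

/-- `t` represents a `B`-central element of `A ⊗_B A`. -/
def IsCent (f : B →ₐ[K] A) (t : A ⊗[K] A) : Prop :=
  ∀ b, lmulT (K := K) (f b) t - rmulT (f b) t ∈ relJ f

/-- `A ⊗_B A` is isomorphic, as a `B`-`A`-bimodule, to a direct summand of `A^N`
for some positive `N`: there is a split mono `ι` (with splitting `π`), both maps
being `B`-`A`-bimodule maps (everything taken modulo the relations `relJ f`). -/
def LeftD2 (f : B →ₐ[K] A) : Prop :=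
  ∃ N : ℕ, 0 < N ∧ ∃ (ι : A ⊗[K] A →ₗ[K] (Fin N → A)) (π : (Fin N → A) →ₗ[K] A ⊗[K] A),
    (∀ z ∈ relJ f, ι z = 0) ∧
    (∀ b z, ι (lmulT (f b) z) = fun i => f b * ι z i) ∧
    (∀ a z, ι (rmulT a z) = fun i => ι z i * a) ∧
    (∀ b (v : Fin N → A), π (fun i => f b * v i) - lmulT (f b) (π v) ∈ relJ f) ∧
    (∀ a (v : Fin N → A), π (fun i => v i * a) - rmulT a (π v) ∈ relJ f) ∧
    (∀ z, π (ι z) - z ∈ relJ f)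

/-- `A ⊗_B A` is isomorphic, as an `A`-`B`-bimodule, to a direct summand of `A^N`. -/
def RightD2 (f : B →ₐ[K] A) : Prop :=
  ∃ N : ℕ, 0 < N ∧ ∃ (ι : A ⊗[K] A →ₗ[K] (Fin N → A)) (π : (Fin N → A) →ₗ[K] A ⊗[K] A),
    (∀ z ∈ relJ f, ι z = 0) ∧
    (∀ a z, ι (lmulT a z) = fun i => a * ι z i) ∧
    (∀ b z, ι (rmulT (f b) z) = fun i => ι z i * f b) ∧
    (∀ a (v : Fin N → A), π (fun i => a * v i) - lmulT a (π v) ∈ relJ f) ∧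
    (∀ b (v : Fin N → A), π (fun i => v i * f b) - rmulT (f b) (π v) ∈ relJ f) ∧
    (∀ z, π (ι z) - z ∈ relJ f)

/-- `A ⊗_B A` is isomorphic, as an `A`-`A`-bimodule, to a direct summand of `A^N`:
H-separability of the extension `f`. -/
def HSep (f : B →ₐ[K] A) : Prop :=
  ∃ N : ℕ, 0 < N ∧ ∃ (ι : A ⊗[K] A →ₗ[K] (Fin N → A)) (π : (Fin N → A) →ₗ[K] A ⊗[K] A),
    (∀ z ∈ relJ f, ι z = 0) ∧
    (∀ a z, ι (lmulT a z) = fun i => a * ι z i) ∧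
    (∀ a z, ι (rmulT a z) = fun i => ι z i * a) ∧
    (∀ a (v : Fin N → A), π (fun i => a * v i) - lmulT a (π v) ∈ relJ f) ∧
    (∀ a (v : Fin N → A), π (fun i => v i * a) - rmulT a (π v) ∈ relJ f) ∧
    (∀ z, π (ι z) - z ∈ relJ f)


section AuxLemmas

lemma lmulT_tmul (a x y : A) : lmulT (K := K) a (x ⊗ₜ[K] y) = (a * x) ⊗ₜ[K] y := rfl
lemma rmulT_tmul (a x y : A) : rmulT (K := K) a (x ⊗ₜ[K] y) = x ⊗ₜ[K] (y * a) := rfl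

lemma lmulT_mul (a b : A) (z : A ⊗[K] A) :
    lmulT (a * b) z = lmulT a (lmulT b z) := by
  simp [lmulT, mulLeft_mul, rTensor_comp, LinearMap.comp_apply]

lemma lmulT_rmulT (a b : A) (z : A ⊗[K] A) :
    lmulT a (rmulT b z) = rmulT b (lmulT a z) := by
  induction z using TensorProduct.induction_on with
  | zero => simp
  | tmul x y => simp [lmulT_tmul, rmulT_tmul]
  | add x y hx hy => simp [map_add, hx, hy]

lemma relJ_lmulT (f : B →ₐ[K] A) (a : A) {z : A ⊗[K] A} (hz : z ∈ relJ f) :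
    lmulT a z ∈ relJ f := by
  induction hz using Submodule.span_induction with
  | mem w hw =>
    obtain ⟨x, b, y, rfl⟩ := hw
    apply Submodule.subset_span
    exact ⟨a * x, b, y, by simp [lmulT_tmul, map_sub, mul_assoc]⟩
  | zero => simp
  | add _ _ _ _ h1 h2 => rw [map_add]; exact add_mem h1 h2
  | smul c _ _ h => rw [map_smul]; exact Submodule.smul_mem _ _ h

lemma relJ_rmulT (f : B →ₐ[K] A) (a : A) {z : A ⊗[K] A} (hz : z ∈ relJ f) :
    rmulT a z ∈ relJ f := by
  induction hz using Submodule.span_induction with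
  | mem w hw =>
    obtain ⟨x, b, y, rfl⟩ := hw
    apply Submodule.subset_span
    exact ⟨x, b, y * a, by simp [rmulT_tmul, map_sub, mul_assoc]⟩
  | zero => simp
  | add _ _ _ _ h1 h2 => rw [map_add]; exact add_mem h1 h2
  | smul c _ _ h => rw [map_smul]; exact Submodule.smul_mem _ _ h

/-- `a ↦ lmulT a t` as a linear map. -/
def lmulTR (t : A ⊗[K] A) : A →ₗ[K] A ⊗[K] A where
  toFun a := lmulT a t
  map_add' a b := by
    induction t using TensorProduct.induction_on with
    | zero => simp
    | tmul x y => simp [lmulT_tmul, add_mul, TensorProduct.add_tmul]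
    | add x y hx hy => simp only [map_add, hx, hy]; abel
  map_smul' c a := by
    induction t using TensorProduct.induction_on with
    | zero => simp
    | tmul x y => simp [lmulT_tmul, TensorProduct.smul_tmul', smul_mul_assoc]
    | add x y hx hy =>
      simp only [RingHom.id_apply] at hx hy
      simp only [map_add, smul_add]
      exact congrArg₂ HAdd.hAdd hx hy

@[simp] lemma lmulTR_apply (t : A ⊗[K] A) (a : A) : lmulTR t a = lmulT a t := rfl

end AuxLemmas


open Matrix

/-- The subalgebra of upper triangular `n × n` matrices. -/
def upperTriangular (k : Type*) [CommRing k] (n : ℕ) :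
    Subalgebra k (Matrix (Fin n) (Fin n) k) where
  carrier := {M | M.BlockTriangular (_root_.id : Fin n → Fin n)}
  add_mem' ha hb := ha.add hb
  mul_mem' ha hb := ha.mul hb
  algebraMap_mem' r := by
    show Matrix.BlockTriangular (Matrix.diagonal fun _ => r) (_root_.id : Fin n → Fin n)
    exact Matrix.blockTriangular_diagonal _


lemma casimir_aux {k : Type*} [Field k] {n : ℕ} {ι : Type*} [DecidableEq ι] (z : ι)
    (a : Matrix (Fin n) (Fin n) k) :
    (∑ i : Fin n, (a * Matrix.single i z (1 : k)) ⊗ₜ[k]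
        (Matrix.single z i (1 : k))) =
      ∑ i : Fin n, (Matrix.single i z (1 : k)) ⊗ₜ[k]
        ((Matrix.single z i (1 : k)) * a) := by
  classical
  have hmulL : ∀ i : Fin n,
      a * Matrix.single i z (1 : k) = ∑ j, Matrix.single j z (a j i) := by
    intro i
    ext r c
    simp [Matrix.sum_apply, Matrix.mul_apply, Matrix.single, Finset.sum_ite_eq,
      ite_and, eq_comm]
  have hmulR : ∀ i : Fin n,
      Matrix.single z i (1 : k) * a = ∑ j, Matrix.single z j (a i j) := by
    intro i
    ext r c
    simp [Matrix.sum_apply, Matrix.mul_apply, Matrix.single, Finset.sum_ite_eq,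
      ite_and, eq_comm]
  have lhs : ∀ i : Fin n,
      (a * Matrix.single i z (1 : k)) ⊗ₜ[k] (Matrix.single z i (1 : k)) =
        ∑ j, a j i • ((Matrix.single j z (1 : k)) ⊗ₜ[k]
          (Matrix.single z i (1 : k))) := by
    intro i
    rw [hmulL, TensorProduct.sum_tmul]
    refine Finset.sum_congr rfl fun j _ => ?_
    rw [TensorProduct.smul_tmul', Matrix.smul_single, smul_eq_mul, mul_one]
  have rhs : ∀ i : Fin n,
      (Matrix.single i z (1 : k)) ⊗ₜ[k] ((Matrix.single z i (1 : k)) * a) =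
        ∑ j, a i j • ((Matrix.single i z (1 : k)) ⊗ₜ[k]
          (Matrix.single z j (1 : k))) := by
    intro i
    rw [hmulR, TensorProduct.tmul_sum]
    refine Finset.sum_congr rfl fun j _ => ?_
    rw [← TensorProduct.tmul_smul, Matrix.smul_single, smul_eq_mul, mul_one]
  simp only [lhs, rhs]
  exact Finset.sum_comm

/-- for `A = M_n(k)` over `C = T_n(k)` (upper triangular matrices),
`1 ⊗_C 1 = Σᵢ e_{i1} ⊗_C e_{1i}`, the image of a Casimir element of `(A ⊗_k A)^A`;
consequently `A` is an H-separable extension of `C`. -/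
theorem matrix_upperTriangular_hSeparable (k : Type*) [Field k] (n : ℕ) [NeZero n] :
    letI f := (upperTriangular k n).val
    -- `1 ⊗_C 1` equals the canonical image of the Casimir element `Σᵢ e_{i1} ⊗ e_{1i}`
    (((1 : Matrix (Fin n) (Fin n) k) ⊗ₜ[k] (1 : Matrix (Fin n) (Fin n) k)) -
        ∑ i : Fin n, (Matrix.single i 0 (1 : k)) ⊗ₜ[k] (Matrix.single 0 i (1 : k))
      ∈ relJ f) ∧
    -- `Σᵢ e_{i1} ⊗ e_{1i}` is a Casimir (A-central) element of `A ⊗_k A`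
    (∀ a : Matrix (Fin n) (Fin n) k,
      (∑ i : Fin n, (a * Matrix.single i 0 (1 : k)) ⊗ₜ[k] (Matrix.single 0 i (1 : k))) =
        ∑ i : Fin n, (Matrix.single i 0 (1 : k)) ⊗ₜ[k] ((Matrix.single 0 i (1 : k)) * a)) ∧
    -- hence the extension is H-separable
    HSep (upperTriangular k n).val := by
  classical
  letI M := Matrix (Fin n) (Fin n) k
  have hone : (1 : Matrix (Fin n) (Fin n) k) = ∑ i : Fin n, Matrix.single i i (1 : k) := by
    ext r c
    simp [Matrix.sum_apply, Matrix.single, Matrix.one_apply, Finset.sum_ite_eq,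
      ite_and, eq_comm]
  have hmulL : ∀ (a : Matrix (Fin n) (Fin n) k) (i : Fin n),
      a * Matrix.single i (0 : Fin n) (1 : k) = ∑ j, Matrix.single j (0 : Fin n) (a j i) := by
    intro a i
    ext r c
    simp [Matrix.sum_apply, Matrix.mul_apply, Matrix.single, Finset.sum_ite_eq,
      ite_and, eq_comm]
  have hmulR : ∀ (a : Matrix (Fin n) (Fin n) k) (i : Fin n),
      Matrix.single (0 : Fin n) i (1 : k) * a = ∑ j, Matrix.single (0 : Fin n) j (a i j) := by
    intro a i
    ext r c
    simp [Matrix.sum_apply, Matrix.mul_apply, Matrix.single, Finset.sum_ite_eq,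
      ite_and, eq_comm]
  have hmem : ∀ i : Fin n, Matrix.single (0 : Fin n) i (1 : k) ∈ upperTriangular k n := by
    intro i r c h
    apply Matrix.single_apply_of_ne
    rintro ⟨rfl, rfl⟩
    exact absurd h (by simp)
  have hpart1 : ((1 : Matrix (Fin n) (Fin n) k) ⊗ₜ[k] (1 : Matrix (Fin n) (Fin n) k)) -
      (∑ i : Fin n, (Matrix.single i (0 : Fin n) (1 : k)) ⊗ₜ[k]
        (Matrix.single (0 : Fin n) i (1 : k))) ∈ relJ (upperTriangular k n).val := by
    have heq : ((1 : Matrix (Fin n) (Fin n) k) ⊗ₜ[k] (1 : Matrix (Fin n) (Fin n) k)) -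
        (∑ i : Fin n, (Matrix.single i (0 : Fin n) (1 : k)) ⊗ₜ[k]
          (Matrix.single (0 : Fin n) i (1 : k))) =
        ∑ i : Fin n, ((Matrix.single i i (1 : k)) ⊗ₜ[k] (1 : Matrix (Fin n) (Fin n) k) -
          (Matrix.single i (0 : Fin n) (1 : k)) ⊗ₜ[k] (Matrix.single (0 : Fin n) i (1 : k))) := by
      rw [Finset.sum_sub_distrib]
      congr 1
      rw [hone]
      exact TensorProduct.sum_tmul _ _ _
    rw [heq]
    refine Submodule.sum_mem _ fun i _ => Submodule.subset_span ?_
    refine ⟨Matrix.single i (0 : Fin n) (1 : k),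
      ⟨Matrix.single (0 : Fin n) i (1 : k), hmem i⟩, (1 : Matrix (Fin n) (Fin n) k), ?_⟩
    simp [Matrix.single_mul_single_same]
  refine ⟨hpart1, fun a => casimir_aux _ a, ?_⟩
  set f := (upperTriangular k n).val with hf
  set t : Matrix (Fin n) (Fin n) k ⊗[k] Matrix (Fin n) (Fin n) k :=
    ∑ i : Fin n, (Matrix.single i (0 : Fin n) (1 : k)) ⊗ₜ[k]
      (Matrix.single (0 : Fin n) i (1 : k)) with ht
  have hcas : ∀ a : Matrix (Fin n) (Fin n) k, lmulT a t = rmulT a t := by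
    intro a
    rw [ht, map_sum, map_sum]
    simp only [lmulT_tmul, rmulT_tmul]
    exact casimir_aux (0 : Fin n) a
  refine ⟨1, Nat.one_pos,
    LinearMap.pi (fun _ : Fin 1 => LinearMap.mul' k (Matrix (Fin n) (Fin n) k)),
    (lmulTR t).comp (LinearMap.proj 0), ?_, ?_, ?_, ?_, ?_, ?_⟩
  · intro z hz
    induction hz using Submodule.span_induction with
    | mem w hw =>
      obtain ⟨x, b, y, rfl⟩ := hw
      funext i
      simp [LinearMap.pi_apply, mul_assoc]
    | zero => simp
    | add _ _ _ _ h1 h2 => rw [map_add, h1, h2, add_zero]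
    | smul c _ _ h => rw [_root_.map_smul, h, smul_zero]
  · intro a z
    funext i
    simp only [LinearMap.pi_apply]
    induction z using TensorProduct.induction_on with
    | zero => simp
    | tmul x y => simp [lmulT_tmul, mul_assoc]
    | add x y hx hy => simp only [map_add, hx, hy, mul_add]
  · intro a z
    funext i
    simp only [LinearMap.pi_apply]
    induction z using TensorProduct.induction_on with
    | zero => simp
    | tmul x y => simp [rmulT_tmul, mul_assoc]
    | add x y hx hy => simp only [map_add, hx, hy, add_mul]
  · intro a v
    simp only [LinearMap.comp_apply, LinearMap.proj_apply, lmulTR_apply]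
    rw [← lmulT_mul, sub_self]
    exact zero_mem _
  · intro a v
    simp only [LinearMap.comp_apply, LinearMap.proj_apply, lmulTR_apply]
    rw [lmulT_mul, hcas a, lmulT_rmulT, sub_self]
    exact zero_mem _
  · intro z
    induction z using TensorProduct.induction_on with
    | zero => rw [map_zero, map_zero, sub_zero]; exact zero_mem _
    | tmul x y =>
      have h := relJ_lmulT f x (relJ_rmulT f y hpart1)
      rw [map_sub, map_sub, rmulT_tmul, lmulT_tmul, mul_one, one_mul,
        ← hcas y, ← lmulT_mul] at h
      have hev : (LinearMap.comp (lmulTR t) (LinearMap.proj 0))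
          ((LinearMap.pi fun _ : Fin 1 => LinearMap.mul' k (Matrix (Fin n) (Fin n) k))
            (x ⊗ₜ[k] y)) = lmulT (x * y) t := by
        simp [LinearMap.pi_apply]
      rw [hev, ← neg_sub]
      exact neg_mem h
    | add z w hz hw =>
      have := add_mem hz hw
      simpa [map_add, add_sub_add_comm] using this

end
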